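/- Let k > ℓ ≥ 1 and let n be divisible by k−ℓ, with n sufficiently large. Then the maximum 1-density of the k-uniform ℓ-cycle, m₁(C_{n,k,ℓ}) = max over subhypergraphs F with at least 2 vertices of |E(F)|/(|V(F)|−1), equals (1/(k−ℓ))·(n/(n−1)). -/
import Mathlib


open Finset

/-- The `k`-uniform `ℓ`-cycle on vertex set `ZMod n`. -/
def cycleHG (n k ℓ : ℕ) : Finset (Finset (ZMod n)) :=
  (Finset.range (n / (k - ℓ))).image
    (fun i => (Finset.range k).image (fun j => (((k - ℓ) * i + j : ℕ) : ZMod n)))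

/-- The `i`-th edge of the cycle. -/
def edgeF (n k ℓ : ℕ) (i : ℕ) : Finset (ZMod n) :=
  (Finset.range k).image (fun j => (((k - ℓ) * i + j : ℕ) : ZMod n))

lemma cycleHG_eq (n k ℓ : ℕ) :
    cycleHG n k ℓ = (Finset.range (n / (k - ℓ))).image (edgeF n k ℓ) := rfl

/-- The `i`-th "private block" of `k - ℓ` vertices. -/
def blockF (n k ℓ : ℕ) (i : ℕ) : Finset (ZMod n) :=
  (Finset.range (k - ℓ)).image (fun s => (((k - ℓ) * i + ℓ + s : ℕ) : ZMod n))

lemma castInj {n a b : ℕ} (ha : a < n) (hb : b < n) (h : (a : ZMod n) = (b : ZMod n)) :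
    a = b := by
  haveI : NeZero n := ⟨by omega⟩
  rw [← ZMod.val_cast_of_lt ha, ← ZMod.val_cast_of_lt hb, h]

lemma castCases {n a b : ℕ} (ha : a < n) (hb : b < 2 * n) (h : (a : ZMod n) = (b : ZMod n)) :
    b = a ∨ b = a + n := by
  have hm : a % n = b % n := (ZMod.natCast_eq_natCast_iff a b n).mp h
  rcases lt_or_ge b n with h' | h'
  · left
    rw [Nat.mod_eq_of_lt ha, Nat.mod_eq_of_lt h'] at hm
    omega
  · right
    rw [Nat.mod_eq_of_lt ha, Nat.mod_eq_sub_mod h', Nat.mod_eq_of_lt (by omega)] at hm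
    omega

lemma vtx_helper (d i ℓ : ℕ) (hi : 1 ≤ i) (hℓ : 1 ≤ ℓ) (hd : 1 ≤ d) :
    d * (i - 1) + ℓ + (d - 1) = d * i + (ℓ - 1) := by
  obtain ⟨i', rfl⟩ := Nat.exists_eq_add_of_le hi
  obtain ⟨ℓ', rfl⟩ := Nat.exists_eq_add_of_le hℓ
  obtain ⟨d', rfl⟩ := Nat.exists_eq_add_of_le hd
  simp only [Nat.add_sub_cancel_left]
  ring

lemma existsBoundary {N : ℕ} {S : Finset ℕ} (hS : S ⊆ Finset.range N) (hne : S.Nonempty)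
    (hpr : S ≠ Finset.range N) : ∃ i ∈ S, (i + (N - 1)) % N ∉ S := by
  by_contra hcon
  push_neg at hcon
  obtain ⟨i, hi⟩ := hne
  obtain ⟨j, hjR, hjS⟩ : ∃ j, j ∈ Finset.range N ∧ j ∉ S := by
    by_contra h
    push_neg at h
    exact hpr (Finset.Subset.antisymm hS (fun j hj => h j hj))
  have hiN : i < N := Finset.mem_range.mp (hS hi)
  have hjN : j < N := Finset.mem_range.mp hjR
  have key : ∀ m, (i + m * (N - 1)) % N ∈ S := by
    intro m
    induction m with
    | zero => simpa [Nat.mod_eq_of_lt hiN] using hi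
    | succ m ih =>
        have h2 := hcon _ ih
        rw [Nat.mod_add_mod] at h2
        rwa [show i + m * (N - 1) + (N - 1) = i + (m + 1) * (N - 1) by
          rw [Nat.succ_mul, ← Nat.add_assoc]] at h2
  have hkey := key (i + N - j)
  have hid : i + (i + N - j) * (N - 1) = (i + N - j - 1) * N + j := by
    zify [show j ≤ i + N by omega, show 1 ≤ i + N - j by omega, show 1 ≤ N by omega]
    ring
  rw [hid, Nat.add_comm, Nat.add_mul_mod_self_right, Nat.mod_eq_of_lt hjN] at hkey
  exact hjS hkey

lemma edge_inj_aux {n k ℓ N : ℕ} (hℓk : ℓ < k) (hN : n = (k - ℓ) * N) (hn : 2 * k ≤ n)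
    {i₁ i₂ : ℕ} (h12 : i₁ < i₂) (h2 : i₂ < N) : edgeF n k ℓ i₁ ≠ edgeF n k ℓ i₂ := by
  have hd : 0 < k - ℓ := by omega
  have hA : (k - ℓ) * i₁ < (k - ℓ) * i₂ := mul_lt_mul_of_pos_left h12 hd
  have hB : (k - ℓ) * i₂ < n := by
    rw [hN]; exact mul_lt_mul_of_pos_left h2 hd
  have hAn : (k - ℓ) * i₁ < n := lt_trans hA hB
  intro he
  have m1 : (((k - ℓ) * i₁ + 0 : ℕ) : ZMod n) ∈ edgeF n k ℓ i₂ := by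
    rw [← he]
    simp only [edgeF, Finset.mem_image, Finset.mem_range]
    exact ⟨0, by omega, rfl⟩
  simp only [edgeF, Finset.mem_image, Finset.mem_range] at m1
  obtain ⟨j, hj, hje⟩ := m1
  rw [Nat.add_zero] at hje
  rcases castCases hAn (by omega) hje.symm with hb | hb
  · linarith
  · have m2 : (((k - ℓ) * i₂ + 0 : ℕ) : ZMod n) ∈ edgeF n k ℓ i₁ := by
      rw [he]
      simp only [edgeF, Finset.mem_image, Finset.mem_range]
      exact ⟨0, by omega, rfl⟩
    simp only [edgeF, Finset.mem_image, Finset.mem_range] at m2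
    obtain ⟨j', hj', hje'⟩ := m2
    rw [Nat.add_zero] at hje'
    rcases castCases hB (by omega) hje'.symm with hb' | hb'
    · linarith
    · linarith

lemma edge_inj {n k ℓ N : ℕ} (hℓk : ℓ < k) (hN : n = (k - ℓ) * N) (hn : 2 * k ≤ n) :
    Set.InjOn (edgeF n k ℓ) ↑(Finset.range N) := by
  intro i₁ h₁ i₂ h₂ he
  rw [Finset.mem_coe, Finset.mem_range] at h₁ h₂
  rcases lt_trichotomy i₁ i₂ with h | h | h
  · exact absurd he (edge_inj_aux hℓk hN hn h h₂)
  · exact h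
  · exact absurd he.symm (edge_inj_aux hℓk hN hn h h₁)

lemma block_aux {n k ℓ N : ℕ} (hℓ1 : 1 ≤ ℓ) (hℓk : ℓ < k) (hN : n = (k - ℓ) * N)
    {i₁ i₂ s₁ s₂ : ℕ} (h1 : i₁ < N) (h2 : i₂ < N) (hs1 : s₁ < k - ℓ) (hs2 : s₂ < k - ℓ)
    (h : (((k - ℓ) * i₁ + ℓ + s₁ : ℕ) : ZMod n) = (((k - ℓ) * i₂ + ℓ + s₂ : ℕ) : ZMod n)) :
    i₁ = i₂ ∧ s₁ = s₂ := by
  have hd : 0 < k - ℓ := by omega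
  have e1 : ((k - ℓ) * i₁ + ℓ + s₁ : ℕ) = ℓ + ((k - ℓ) * i₁ + s₁) := by
    rw [Nat.add_right_comm, Nat.add_comm]
  have e2 : ((k - ℓ) * i₂ + ℓ + s₂ : ℕ) = ℓ + ((k - ℓ) * i₂ + s₂) := by
    rw [Nat.add_right_comm, Nat.add_comm]
  rw [e1, e2,
    show ((ℓ + ((k - ℓ) * i₁ + s₁) : ℕ) : ZMod n)
      = (ℓ : ZMod n) + (((k - ℓ) * i₁ + s₁ : ℕ) : ZMod n) from Nat.cast_add _ _,
    show ((ℓ + ((k - ℓ) * i₂ + s₂) : ℕ) : ZMod n)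
      = (ℓ : ZMod n) + (((k - ℓ) * i₂ + s₂ : ℕ) : ZMod n) from Nat.cast_add _ _] at h
  have h' := add_left_cancel h
  have hbound : ∀ i s, i < N → s < k - ℓ → (k - ℓ) * i + s < n := by
    intro i s hi hs
    have h3 : (k - ℓ) * (i + 1) ≤ (k - ℓ) * N := Nat.mul_le_mul_left _ (by omega)
    have h4 : (k - ℓ) * (i + 1) = (k - ℓ) * i + (k - ℓ) := by rw [Nat.mul_succ]
    rw [hN]
    linarith
  have hnat : (k - ℓ) * i₁ + s₁ = (k - ℓ) * i₂ + s₂ :=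
    castInj (hbound _ _ h1 hs1) (hbound _ _ h2 hs2) h'
  have hi : i₁ = i₂ := by
    have q1 : ((k - ℓ) * i₁ + s₁) / (k - ℓ) = i₁ := by
      rw [Nat.mul_add_div hd, Nat.div_eq_of_lt hs1, Nat.add_zero]
    have q2 : ((k - ℓ) * i₂ + s₂) / (k - ℓ) = i₂ := by
      rw [Nat.mul_add_div hd, Nat.div_eq_of_lt hs2, Nat.add_zero]
    rw [← q1, ← q2, hnat]
  refine ⟨hi, ?_⟩
  rw [hi] at hnat
  exact Nat.add_left_cancel hnat

/-- for `k > ℓ ≥ 1` and all sufficiently large `n` divisible by `k - ℓ`,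
the maximum `1`-density `m₁(C_{n,k,ℓ})`, i.e. the maximum over subhypergraphs `(U, F)`
with at least two vertices of `|F| / (|U| - 1)`, equals `(1/(k-ℓ)) * (n/(n-1))`. -/
theorem stmt3 {k ℓ : ℕ} (hℓ1 : 1 ≤ ℓ) (hℓk : ℓ < k) :
    ∃ n₀ : ℕ, ∀ n : ℕ, n₀ ≤ n → (k - ℓ) ∣ n →
      IsGreatest {d : ℝ | ∃ (U : Finset (ZMod n)) (F : Finset (Finset (ZMod n))),
          F ⊆ cycleHG n k ℓ ∧ (∀ e ∈ F, e ⊆ U) ∧ 2 ≤ U.card ∧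
          d = (F.card : ℝ) / ((U.card : ℝ) - 1)}
        ((1 / ((k : ℝ) - (ℓ : ℝ))) * ((n : ℝ) / ((n : ℝ) - 1))) := by
  classical
  refine ⟨2 * k + 2, fun n hn hdvd => ?_⟩
  obtain ⟨N, hN⟩ := hdvd
  have hd : 1 ≤ k - ℓ := by omega
  have hn2 : 2 ≤ n := by omega
  haveI : NeZero n := ⟨by omega⟩
  have hNdef : n / (k - ℓ) = N := by rw [hN, Nat.mul_div_cancel_left _ (by omega)]
  have hN1 : 1 ≤ N := by
    rcases Nat.eq_zero_or_pos N with h | h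
    · rw [h, Nat.mul_zero] at hN; omega
    · exact h
  have hcyc : cycleHG n k ℓ = (Finset.range N).image (edgeF n k ℓ) := by
    rw [cycleHG_eq, hNdef]
  have hinj : Set.InjOn (edgeF n k ℓ) ↑(Finset.range N) := edge_inj hℓk hN (by omega)
  have hdR : ((k : ℝ) - (ℓ : ℝ)) = ((k - ℓ : ℕ) : ℝ) := (Nat.cast_sub hℓk.le).symm
  have hnR : (n : ℝ) = ((k - ℓ : ℕ) : ℝ) * (N : ℝ) := by rw [hN]; push_cast; ring
  have hdpos : (0 : ℝ) < ((k - ℓ : ℕ) : ℝ) := by exact_mod_cast hd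
  have hn1pos : (0 : ℝ) < (n : ℝ) - 1 := by
    have : (2 : ℝ) ≤ (n : ℝ) := by exact_mod_cast hn2
    linarith
  have hdiv : (n : ℝ) / ((k - ℓ : ℕ) : ℝ) = (N : ℝ) := by
    rw [hnR, mul_comm, mul_div_assoc, div_self (ne_of_gt hdpos), mul_one]
  have hRHS : (1 / ((k : ℝ) - (ℓ : ℝ))) * ((n : ℝ) / ((n : ℝ) - 1))
      = (N : ℝ) / ((n : ℝ) - 1) := by
    rw [hdR, show (1 / ((k - ℓ : ℕ) : ℝ)) * ((n : ℝ) / ((n : ℝ) - 1))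
      = ((n : ℝ) / ((k - ℓ : ℕ) : ℝ)) / ((n : ℝ) - 1) from by ring, hdiv]
  constructor
  · -- membership : the whole cycle attains the value
    refine ⟨Finset.univ, cycleHG n k ℓ, Finset.Subset.refl _,
      fun e _ => Finset.subset_univ e, ?_, ?_⟩
    · rw [Finset.card_univ, ZMod.card]; omega
    · rw [hRHS, hcyc, Finset.card_image_of_injOn hinj, Finset.card_range,
        Finset.card_univ, ZMod.card]
  · -- upper bound
    rintro x ⟨U, F, hFsub, hFU, hU2, rfl⟩
    rw [hRHS]
    set S := (Finset.range N).filter (fun i => edgeF n k ℓ i ∈ F) with hSdef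
    have hSsub : S ⊆ Finset.range N := Finset.filter_subset _ _
    have hFeq : F = S.image (edgeF n k ℓ) := by
      ext a
      simp only [Finset.mem_image, hSdef, Finset.mem_filter]
      constructor
      · intro ha
        have h2 := hFsub ha
        rw [hcyc] at h2
        obtain ⟨i, hi, rfl⟩ := Finset.mem_image.mp h2
        exact ⟨i, ⟨hi, ha⟩, rfl⟩
      · rintro ⟨i, ⟨hi, hia⟩, rfl⟩
        exact hia
    have hFcard : F.card = S.card := by
      rw [hFeq, Finset.card_image_of_injOn (hinj.mono (Finset.coe_subset.mpr hSsub))]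
    have hUmem : ∀ i ∈ S, edgeF n k ℓ i ⊆ U := fun i hi =>
      hFU _ (by rw [hFeq]; exact Finset.mem_image_of_mem _ hi)
    have hU1R : (1 : ℝ) ≤ (U.card : ℝ) - 1 := by
      have : (2 : ℝ) ≤ (U.card : ℝ) := by exact_mod_cast hU2
      linarith
    have hBsub : ∀ i, blockF n k ℓ i ⊆ edgeF n k ℓ i := by
      intro i x hx
      simp only [blockF, Finset.mem_image, Finset.mem_range] at hx
      obtain ⟨s, hs, rfl⟩ := hx
      simp only [edgeF, Finset.mem_image, Finset.mem_range]
      exact ⟨ℓ + s, by omega, by rw [Nat.add_assoc]⟩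
    have hBdisj : ∀ i₁ ∈ Finset.range N, ∀ i₂ ∈ Finset.range N, i₁ ≠ i₂ →
        Disjoint (blockF n k ℓ i₁) (blockF n k ℓ i₂) := by
      intro i₁ h1 i₂ h2 h12
      rw [Finset.disjoint_left]
      intro a ha1 ha2
      simp only [blockF, Finset.mem_image, Finset.mem_range] at ha1 ha2
      obtain ⟨s₁, hs₁, he₁⟩ := ha1
      obtain ⟨s₂, hs₂, he₂⟩ := ha2
      exact h12 ((block_aux hℓ1 hℓk hN (Finset.mem_range.mp h1) (Finset.mem_range.mp h2)
        hs₁ hs₂ (he₁.trans he₂.symm)).1)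
    have hBcard : ∀ i ∈ Finset.range N, (blockF n k ℓ i).card = k - ℓ := by
      intro i hi
      rw [blockF, Finset.card_image_of_injOn, Finset.card_range]
      intro s₁ hs₁ s₂ hs₂ he
      rw [Finset.mem_coe, Finset.mem_range] at hs₁ hs₂
      exact (block_aux hℓ1 hℓk hN (Finset.mem_range.mp hi) (Finset.mem_range.mp hi)
        hs₁ hs₂ he).2
    rcases S.eq_empty_or_nonempty with hSe | hSne
    · rw [hFcard, hSe, Finset.card_empty]
      rw [Nat.cast_zero, zero_div]
      exact div_nonneg (Nat.cast_nonneg N) (by linarith)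
    · by_cases hfull : S = Finset.range N
      · have hsubU : (Finset.range N).biUnion (blockF n k ℓ) ⊆ U := by
          intro a ha
          obtain ⟨i, hi, hai⟩ := Finset.mem_biUnion.mp ha
          exact hUmem i (hfull ▸ hi) (hBsub i hai)
        have hcardbi : ((Finset.range N).biUnion (blockF n k ℓ)).card = n := by
          rw [Finset.card_biUnion hBdisj, Finset.sum_congr rfl hBcard, Finset.sum_const,
            Finset.card_range, smul_eq_mul, Nat.mul_comm, ← hN]
        have hUcard : U.card = n := by
          have hle : U.card ≤ n := by
            have h5 := Finset.card_le_univ U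
            rwa [ZMod.card] at h5
          have hge := Finset.card_le_card hsubU
          rw [hcardbi] at hge
          omega
        rw [hFcard, hfull, Finset.card_range, hUcard]
      · obtain ⟨i₀, hi₀, hprev⟩ := existsBoundary hSsub hSne hfull
        have hi₀N : i₀ < N := Finset.mem_range.mp (hSsub hi₀)
        set p := (i₀ + (N - 1)) % N with hp
        have hpN : p < N := Nat.mod_lt _ (by omega)
        set v : ZMod n := (((k - ℓ) * i₀ + (ℓ - 1) : ℕ) : ZMod n) with hv
        have hvU : v ∈ U := hUmem i₀ hi₀ (by
          simp only [edgeF, Finset.mem_image, Finset.mem_range]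
          exact ⟨ℓ - 1, by omega, rfl⟩)
        have hvB : v ∈ blockF n k ℓ p := by
          simp only [blockF, Finset.mem_image, Finset.mem_range]
          refine ⟨(k - ℓ) - 1, by omega, ?_⟩
          rcases Nat.eq_zero_or_pos i₀ with h0 | h1
          · have hp' : p = N - 1 := by
              rw [hp, h0, Nat.zero_add, Nat.mod_eq_of_lt (by omega)]
            rw [hp', hv, h0, Nat.mul_zero, Nat.zero_add]
            have hkey : (k - ℓ) * (N - 1) + ℓ + ((k - ℓ) - 1) = n + (ℓ - 1) := by
              rw [vtx_helper (k - ℓ) N ℓ hN1 hℓ1 hd, ← hN]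
            rw [hkey, Nat.cast_add, ZMod.natCast_self, zero_add]
          · have hp' : p = i₀ - 1 := by
              rw [hp, show i₀ + (N - 1) = (i₀ - 1) + 1 * N by omega,
                Nat.add_mul_mod_self_right, Nat.mod_eq_of_lt (by omega)]
            rw [hp', hv]
            congr 1
            exact vtx_helper (k - ℓ) i₀ ℓ h1 hℓ1 hd
        have hvnot : v ∉ S.biUnion (blockF n k ℓ) := by
          intro hmem
          obtain ⟨i, hiS, hvi⟩ := Finset.mem_biUnion.mp hmem
          have hip : i = p := by
            by_contra hne
            exact (Finset.disjoint_left.mp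
              (hBdisj i (hSsub hiS) p (Finset.mem_range.mpr hpN) hne)) hvi hvB
          exact hprev (hip ▸ hiS)
        have hWsub : insert v (S.biUnion (blockF n k ℓ)) ⊆ U := by
          intro a ha
          rcases Finset.mem_insert.mp ha with rfl | ha
          · exact hvU
          · obtain ⟨i, hiS, hai⟩ := Finset.mem_biUnion.mp ha
            exact hUmem i hiS (hBsub i hai)
        have hWcard : (insert v (S.biUnion (blockF n k ℓ))).card = (k - ℓ) * S.card + 1 := by
          rw [Finset.card_insert_of_notMem hvnot,
            Finset.card_biUnion (fun i hi j hj hij => hBdisj i (hSsub hi) j (hSsub hj) hij),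
            Finset.sum_congr rfl (fun i hi => hBcard i (hSsub hi)), Finset.sum_const,
            smul_eq_mul, Nat.mul_comm]
        have hUge : (k - ℓ) * S.card + 1 ≤ U.card := by
          rw [← hWcard]
          exact Finset.card_le_card hWsub
        have ht1 : 1 ≤ S.card := Finset.card_pos.mpr hSne
        rw [hFcard]
        have htR : (1 : ℝ) ≤ (S.card : ℝ) := by exact_mod_cast ht1
        have hUgeR : ((k - ℓ : ℕ) : ℝ) * (S.card : ℝ) + 1 ≤ (U.card : ℝ) := by
          exact_mod_cast hUge
        have hNR0 : (0 : ℝ) ≤ (N : ℝ) := Nat.cast_nonneg N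
        rw [div_le_div_iff₀ (by linarith) hn1pos]
        have key : (N : ℝ) * (((k - ℓ : ℕ) : ℝ) * (S.card : ℝ)) = (n : ℝ) * (S.card : ℝ) := by
          rw [hnR]; ring
        have hint := mul_le_mul_of_nonneg_left
          (show ((k - ℓ : ℕ) : ℝ) * (S.card : ℝ) ≤ (U.card : ℝ) - 1 by linarith) hNR0
        linarith [key, hint, htR]
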